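/- Let Ω ⊂ ℝ³ be a Lebesgue-measurable set of finite Lebesgue measure |Ω|, let J ∈ L¹(ℝ³) be even with c_J := ‖J‖_{L¹(ℝ³)} and with a(x) := ∫_Ω J(x−y) dy ≥ 0 for almost every x ∈ Ω. Let F : ℝ → ℝ be continuous with F(s) ≥ c₁ s² − c₂ for all s ∈ ℝ, where c₁ > c_J/2 and c₂ ≥ 0, and let M₀ ∈ ℝ. Then there exists a constant C ≥ 0 such that for every φ ∈ L²(Ω) with F∘φ ∈ L¹(Ω): ∫_Ω a φ² dx + 2 ∫_Ω F(φ) dx − ∬_{Ω×Ω} J(x−y) φ(y) (φ(x) − M₀) dy dx ≥ −C. -/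

import Mathlib

open MeasureTheory

abbrev E3 := EuclideanSpace ℝ (Fin 3)

set_option maxHeartbeats 2000000

/-- Helper: if `|f| ≤ g` pointwise and `g` is integrable, then `|∫ f| ≤ ∫ g`
(even without integrability of `f`). -/
lemma my_abs_integral_le {α : Type*} [MeasurableSpace α] {μ : Measure α} {f g : α → ℝ}
    (hg : Integrable g μ) (h : ∀ x, |f x| ≤ g x) :
    |∫ x, f x ∂μ| ≤ ∫ x, g x ∂μ := by
  by_cases hf : Integrable f μ
  · have h1 : |∫ x, f x ∂μ| ≤ ∫ x, |f x| ∂μ := by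
      simpa [Real.norm_eq_abs] using norm_integral_le_integral_norm (μ := μ) f
    exact h1.trans (integral_mono hf.abs hg h)
  · rw [integral_undef hf, abs_zero]
    exact integral_nonneg fun x => (abs_nonneg _).trans (h x)

/-- Helper: if `|f| ≤ g` pointwise and `g` is integrable, then `-∫ g ≤ ∫ f`
(even without integrability of `f`). -/
lemma my_neg_integral_le {α : Type*} [MeasurableSpace α] {μ : Measure α} {f g : α → ℝ}
    (hg : Integrable g μ) (h : ∀ x, |f x| ≤ g x) :
    -(∫ x, g x ∂μ) ≤ ∫ x, f x ∂μ := by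
  by_cases hf : Integrable f μ
  · have h1 : |∫ x, f x ∂μ| ≤ ∫ x, |f x| ∂μ := by
      simpa [Real.norm_eq_abs] using norm_integral_le_integral_norm (μ := μ) f
    have h2 : ∫ x, |f x| ∂μ ≤ ∫ x, g x ∂μ := integral_mono hf.abs hg h
    have := abs_le.1 h1
    linarith
  · rw [integral_undef hf]
    have h0 : 0 ≤ ∫ x, g x ∂μ :=
      integral_nonneg fun x => (abs_nonneg _).trans (h x)
    linarith

/-- lower bound making the Lyapunov functional nonnegative:
there is `C ≥ 0` such that for all `φ ∈ L²(Ω)` with `F∘φ ∈ L¹(Ω)`,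
`∫ a φ² + 2∫ F(φ) − ∬ J(x−y) φ(y)(φ(x) − M₀) ≥ −C`. -/
theorem lyapunov_functional_lower_bound
    (Ω : Set (EuclideanSpace ℝ (Fin 3))) (hΩ : MeasurableSet Ω)
    (hΩfin : volume Ω < ⊤)
    (J : EuclideanSpace ℝ (Fin 3) → ℝ) (hJ : Integrable J)
    (hJeven : ∀ x, J (-x) = J x)
    (ha_pos : ∀ᵐ x ∂(volume.restrict Ω), (∫ y in Ω, J (x - y)) ≥ 0)
    (F : ℝ → ℝ) (hF : Continuous F)
    (c₁ c₂ : ℝ) (hc₁ : c₁ > (∫ x, |J x|) / 2) (hc₂ : 0 ≤ c₂)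
    (hF_low : ∀ s, F s ≥ c₁ * s ^ 2 - c₂)
    (M₀ : ℝ) :
    ∃ C : ℝ, 0 ≤ C ∧
      ∀ φ : EuclideanSpace ℝ (Fin 3) → ℝ,
        MemLp φ 2 (volume.restrict Ω) →
        IntegrableOn (fun x => F (φ x)) Ω →
        (∫ x in Ω, (∫ y in Ω, J (x - y)) * (φ x) ^ 2)
          + 2 * (∫ x in Ω, F (φ x))
          - (∫ x in Ω, ∫ y in Ω, J (x - y) * φ y * (φ x - M₀))
        ≥ -C := by
  classical
  set cJ : ℝ := ∫ x, |J x| with hcJdef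
  have hcJ0 : 0 ≤ cJ := integral_nonneg fun x => abs_nonneg _
  set γ : ℝ := 2 * c₁ - cJ with hγdef
  have hγ : 0 < γ := by
    have : cJ / 2 < c₁ := hc₁
    simp only [hγdef]; linarith
  set δ : ℝ := γ / (cJ + 1) with hδdef
  have hδ : 0 < δ := div_pos hγ (by linarith)
  set V : ℝ := (volume Ω).toReal with hVdef
  have hV0 : 0 ≤ V := ENNReal.toReal_nonneg
  set K : ℝ := (1 + 1 / δ) * M₀ ^ 2 with hKdef
  have hK0 : 0 ≤ K := by positivity
  refine ⟨2 * c₂ * V + cJ / 2 * K * V, by positivity, ?_⟩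
  intro φ hφ hFφ
  haveI : IsFiniteMeasure (volume.restrict Ω) :=
    ⟨by rwa [Measure.restrict_apply_univ]⟩
  -- basic integrability facts on Ω
  have hφsq : Integrable (fun x => φ x ^ 2) (volume.restrict Ω) := hφ.integrable_sq
  have hφm : MemLp (fun x => φ x - M₀) 2 (volume.restrict Ω) :=
    hφ.sub (memLp_const M₀)
  have hwsq : Integrable (fun x => (φ x - M₀) ^ 2) (volume.restrict Ω) := hφm.integrable_sq
  set S : ℝ := ∫ x in Ω, φ x ^ 2 with hSdef
  have hS0 : 0 ≤ S := integral_nonneg fun x => sq_nonneg _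
  set T : ℝ := ∫ x in Ω, (φ x - M₀) ^ 2 with hTdef
  -- indicator versions on the whole space
  set u : E3 → ℝ := Ω.indicator φ with hudef
  set v : E3 → ℝ := Ω.indicator (fun x => φ x - M₀) with hvdef
  set u2 : E3 → ℝ := Ω.indicator (fun x => φ x ^ 2) with hu2def
  set w : E3 → ℝ := Ω.indicator (fun x => (φ x - M₀) ^ 2) with hwdef
  have hu2int : Integrable u2 (volume : Measure E3) := (integrable_indicator_iff hΩ).2 hφsq
  have hwint : Integrable w (volume : Measure E3) := (integrable_indicator_iff hΩ).2 hwsq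
  have hu_sm : AEStronglyMeasurable u (volume : Measure E3) :=
    (aestronglyMeasurable_indicator_iff hΩ).2 hφ.1
  have hv_sm : AEStronglyMeasurable v (volume : Measure E3) :=
    (aestronglyMeasurable_indicator_iff hΩ).2 hφm.1
  have hu2sq : ∀ y : E3, u2 y = (u y) ^ 2 := by
    intro y; by_cases hy : y ∈ Ω <;>
      simp [hu2def, hudef, Set.indicator_of_mem, Set.indicator_of_notMem, hy]
  have hwsq' : ∀ x : E3, w x = (v x) ^ 2 := by
    intro x; by_cases hx : x ∈ Ω <;>
      simp [hwdef, hvdef, Set.indicator_of_mem, Set.indicator_of_notMem, hx]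
  -- product-space functions
  set G : E3 × E3 → ℝ := fun p => J (p.1 - p.2) * u p.2 * v p.1 with hGdef
  set M : E3 × E3 → ℝ :=
    fun p => (u2 p.2 * |J (p.1 - p.2)| + w p.1 * |J (p.1 - p.2)|) / 2 with hMdef
  have hF1 : Integrable (fun p : E3 × E3 => u2 p.2 * |J (p.1 - p.2)|)
      ((volume : Measure E3).prod volume) := by
    simpa using hu2int.convolution_integrand (ContinuousLinearMap.mul ℝ ℝ) hJ.abs
  have hF2' : Integrable (fun p : E3 × E3 => w p.2 * |J (p.1 - p.2)|)
      ((volume : Measure E3).prod volume) := by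
    simpa using hwint.convolution_integrand (ContinuousLinearMap.mul ℝ ℝ) hJ.abs
  have hF2 : Integrable (fun p : E3 × E3 => w p.1 * |J (p.1 - p.2)|)
      ((volume : Measure E3).prod volume) := by
    have h := hF2'.swap
    have heq : ((fun p : E3 × E3 => w p.2 * |J (p.1 - p.2)|) ∘ Prod.swap)
        = fun p : E3 × E3 => w p.1 * |J (p.1 - p.2)| := by
      funext p
      simp only [Function.comp_apply, Prod.fst_swap, Prod.snd_swap]
      rw [show p.2 - p.1 = -(p.1 - p.2) by abel, hJeven]
    rwa [heq] at h
  have hMint : Integrable M ((volume : Measure E3).prod volume) := by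
    simpa [hMdef] using (hF1.add hF2).div_const 2
  have hGM : ∀ p : E3 × E3, |G p| ≤ M p := by
    intro p
    simp only [hGdef, hMdef]
    rw [hu2sq, hwsq', abs_mul, abs_mul]
    have h1 : |u p.2| * |v p.1| ≤ ((u p.2) ^ 2 + (v p.1) ^ 2) / 2 := by
      nlinarith [sq_nonneg (|u p.2| - |v p.1|), sq_abs (u p.2), sq_abs (v p.1)]
    have h2 : (0:ℝ) ≤ |J (p.1 - p.2)| := abs_nonneg _
    nlinarith [mul_le_mul_of_nonneg_left h1 h2]
  have hG_sm : AEStronglyMeasurable G ((volume : Measure E3).prod volume) := by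
    have h1 := hu_sm.convolution_integrand (ContinuousLinearMap.mul ℝ ℝ)
      hJ.aestronglyMeasurable
    have h2 := hv_sm.comp_fst (ν := (volume : Measure E3))
    have h3 := h1.mul h2
    simp only [ContinuousLinearMap.mul_apply'] at h3
    have heq : G = fun p : E3 × E3 => u p.2 * J (p.1 - p.2) * v p.1 := by
      funext p; simp only [hGdef]; ring
    rw [heq]; exact h3
  have hGint : Integrable G ((volume : Measure E3).prod volume) :=
    Integrable.mono' hMint hG_sm
      (Filter.Eventually.of_forall fun p => by
        simpa [Real.norm_eq_abs] using hGM p)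
  -- rewrite the double integral as a product integral
  have hD : (∫ x in Ω, ∫ y in Ω, J (x - y) * φ y * (φ x - M₀))
      = ∫ p, G p ∂((volume : Measure E3).prod volume) := by
    rw [← integral_indicator hΩ]
    have heq : Ω.indicator (fun x => ∫ y in Ω, J (x - y) * φ y * (φ x - M₀))
        = fun x => ∫ y, J (x - y) * u y * v x := by
      funext x
      by_cases hx : x ∈ Ω
      · rw [Set.indicator_of_mem hx, ← integral_indicator hΩ]
        congr 1
        funext y
        by_cases hy : y ∈ Ω
        · simp [Set.indicator_of_mem, hx, hy, hudef, hvdef]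
        · simp [Set.indicator_of_notMem, hy, hudef]
      · rw [Set.indicator_of_notMem hx]
        have : v x = 0 := Set.indicator_of_notMem hx _
        simp [this]
    rw [heq]
    exact integral_integral hGint
  -- compute the integrals of the majorants
  have hIF1 : (∫ p, u2 p.2 * |J (p.1 - p.2)| ∂((volume : Measure E3).prod volume))
      = cJ * S := by
    have h := integral_integral_swap
      (f := fun x y : E3 => u2 y * |J (x - y)|) hF1
    rw [← integral_integral (f := fun x y : E3 => u2 y * |J (x - y)|) hF1, h]
    have hinner : ∀ y : E3, (∫ x, u2 y * |J (x - y)|) = u2 y * cJ := by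
      intro y
      rw [integral_const_mul]
      congr 1
      exact integral_sub_right_eq_self (fun x => |J x|) y
    simp_rw [hinner]
    rw [integral_mul_const, integral_indicator hΩ, ← hSdef]
    ring
  have hIF2 : (∫ p, w p.1 * |J (p.1 - p.2)| ∂((volume : Measure E3).prod volume))
      = cJ * T := by
    rw [← integral_integral (f := fun x y : E3 => w x * |J (x - y)|) hF2]
    have hinner : ∀ x : E3, (∫ y, w x * |J (x - y)|) = w x * cJ := by
      intro x
      rw [integral_const_mul]
      congr 1
      exact integral_sub_left_eq_self (fun z => |J z|) volume x
    simp_rw [hinner]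
    rw [integral_mul_const, integral_indicator hΩ, ← hTdef]
    ring
  have hIM : (∫ p, M p ∂((volume : Measure E3).prod volume)) = (cJ * S + cJ * T) / 2 := by
    simp only [hMdef]
    rw [integral_div, integral_add hF1 hF2, hIF1, hIF2]
  -- lower bound for the product integral
  have hDle : (∫ p, G p ∂((volume : Measure E3).prod volume)) ≤ (cJ * S + cJ * T) / 2 := by
    have h := my_abs_integral_le hMint hGM
    rw [hIM] at h
    exact (abs_le.1 h).2
  -- the local term is nonnegative
  have hA : 0 ≤ ∫ x in Ω, (∫ y in Ω, J (x - y)) * φ x ^ 2 :=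
    integral_nonneg_of_ae (ha_pos.mono fun x hx => mul_nonneg hx (sq_nonneg _))
  -- lower bound for the F-term
  have hB : ∫ x in Ω, F (φ x) ≥ c₁ * S - c₂ * V := by
    have h1 : ∫ x in Ω, (c₁ * φ x ^ 2 - c₂) ≤ ∫ x in Ω, F (φ x) :=
      integral_mono ((hφsq.const_mul c₁).sub (integrable_const c₂)) hFφ
        fun x => hF_low (φ x)
    rw [integral_sub (hφsq.const_mul c₁) (integrable_const c₂), integral_const_mul,
      setIntegral_const] at h1
    simp only [smul_eq_mul, Measure.real] at h1
    rw [← hSdef] at h1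
    simp only [hVdef]
    linarith
  -- bound T by S
  have hT : T ≤ (1 + δ) * S + K * V := by
    have hpt : ∀ x : E3, (φ x - M₀) ^ 2 ≤ (1 + δ) * φ x ^ 2 + K := by
      intro x
      have h1d : δ * (1 / δ) = 1 := by field_simp
      simp only [hKdef]
      nlinarith [sq_nonneg (δ * φ x + M₀), hδ, sq_nonneg (φ x), sq_nonneg M₀,
        mul_pos hδ hδ]
    have h1 : T ≤ ∫ x in Ω, ((1 + δ) * φ x ^ 2 + K) :=
      integral_mono hwsq ((hφsq.const_mul _).add (integrable_const K)) hpt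
    rw [integral_add (hφsq.const_mul _) (integrable_const K), integral_const_mul,
      setIntegral_const] at h1
    simp only [smul_eq_mul, Measure.real] at h1
    rw [← hSdef] at h1
    simp only [hVdef]
    linarith
  -- assemble everything
  rw [hD]
  have hTcJ : cJ * T ≤ cJ * ((1 + δ) * S + K * V) :=
    mul_le_mul_of_nonneg_left hT hcJ0
  have hcoef : cJ * δ ≤ γ := by
    have hpos : (0:ℝ) < cJ + 1 := by linarith
    rw [hδdef, ← mul_div_assoc, div_le_iff₀ hpos]
    nlinarith [hγ.le, hcJ0]
  have hfin : 0 ≤ (2 * c₁ - cJ - cJ * δ / 2) * S := by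
    apply mul_nonneg _ hS0
    simp only [hγdef] at hcoef hγ
    linarith
  linarith [hA, hB, hDle, hTcJ, hfin]
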